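/- arXiv:2111.04811 — 4 statements merged into one kernel-verified Lean document; each statement's English description precedes it below -/
import Mathlib

section
/- Let L : R × R → R be real-analytic at (qᵃ, q̇ᵃ) and separable: L(q,q̇) = V(q̇) + W(q). Define the discrete Lagrangian L_d(q0,q1) = Δt · L(b q0 + c q1, (q1−q0)/Δt) with Δt > 0 and constants b, c. Define L̃_d(q0,q1) = Δt · L̃(b q0 + c q1, (q1−q0)/Δt), where L̃ is the second-order Taylor polynomial of L at (qᵃ, q̇ᵃ). Then for any point (q0ᵃ, q1ᵃ) satisfying b q0ᵃ + c q1ᵃ = qᵃ and (q1ᵃ − q0ᵃ)/Δt = q̇ᵃ, the first-order Taylor approximations (Jacobian linearizations) of D₁L_d and D₂L_d at (q0ᵃ, q1ᵃ) coincide with D₁L̃_d and D₂L̃_d respectively, as affine functions of (q0,q1). -/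
lemma affineHD (f : ℝ → ℝ) (m k x : ℝ) (hf : DifferentiableAt ℝ f (m*x+k)) :
    HasDerivAt (fun y => f (m*y+k)) (deriv f (m*x+k) * m) x := by
  have h : HasDerivAt (fun y : ℝ => m*y+k) m x := by
    simpa using ((hasDerivAt_id x).const_mul m).add_const k
  exact hf.hasDerivAt.comp x h

lemma megaHD (f g : ℝ → ℝ) (α β C m₁ k₁ m₂ k₂ x z₁ z₂ : ℝ)
    (hz₁ : m₁*x+k₁ = z₁) (hz₂ : m₂*x+k₂ = z₂)
    (hf : DifferentiableAt ℝ f z₁) (hg : DifferentiableAt ℝ g z₂)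
    (F : ℝ → ℝ) (hF : ∀ t, F t = α * f (m₁*t+k₁) + β * g (m₂*t+k₂) + C) :
    HasDerivAt F (α * (deriv f z₁ * m₁) + β * (deriv g z₂ * m₂)) x := by
  subst hz₁; subst hz₂
  have hF' : F = fun t => α * f (m₁*t+k₁) + β * g (m₂*t+k₂) + C := funext hF
  rw [hF']
  exact (((affineHD f m₁ k₁ x hf).const_mul α).add
    ((affineHD g m₂ k₂ x hg).const_mul β)).add_const C

noncomputable def quadP (a1 a2 ctr : ℝ) : ℝ → ℝ :=
  fun q => a1*(q - ctr) + (1/2)*a2*(q - ctr)^2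

lemma quadP_hasDerivAt (a1 a2 ctr q : ℝ) :
    HasDerivAt (quadP a1 a2 ctr) (a1 + a2*(q - ctr)) q := by
  have h1 : HasDerivAt (fun q : ℝ => q - ctr) 1 q := (hasDerivAt_id q).sub_const ctr
  have := (h1.const_mul a1).add ((h1.pow 2).const_mul ((1/2)*a2))
  exact this.congr_deriv (by push_cast; ring)


/-- for a separable analytic Lagrangian, the Jacobian linearization of the
discrete Euler–Lagrange gradients `D₁L_d`, `D₂L_d` at a consistent approximation point
coincides with the gradients of the discrete Lagrangian built from the second-order
Taylor polynomial of `L`. -/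
theorem jacobian_lin_eq_quadratic_approx
    (V W : ℝ → ℝ) (L : ℝ → ℝ → ℝ) (hL : ∀ q qd, L q qd = V qd + W q)
    (qa qda : ℝ) (hVa : AnalyticAt ℝ V qda) (hWa : AnalyticAt ℝ W qa)
    (b c Δt : ℝ) (hΔt : 0 < Δt)
    (Lt : ℝ → ℝ → ℝ)
    (hLt : ∀ q qd, Lt q qd =
      L qa qda + deriv W qa * (q - qa) + deriv V qda * (qd - qda)
        + (1/2) * deriv (deriv W) qa * (q - qa)^2
        + (1/2) * deriv (deriv V) qda * (qd - qda)^2)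
    (Ld Ltd : ℝ → ℝ → ℝ)
    (hLd : ∀ q0 q1, Ld q0 q1 = Δt * L (b * q0 + c * q1) ((q1 - q0) / Δt))
    (hLtd : ∀ q0 q1, Ltd q0 q1 = Δt * Lt (b * q0 + c * q1) ((q1 - q0) / Δt))
    (q0a q1a : ℝ) (hqa : b * q0a + c * q1a = qa) (hqda : (q1a - q0a) / Δt = qda)
    (D1Ld D2Ld : ℝ → ℝ → ℝ)
    (hD1 : ∀ q0 q1, D1Ld q0 q1 = deriv (fun x => Ld x q1) q0)
    (hD2 : ∀ q0 q1, D2Ld q0 q1 = deriv (fun y => Ld q0 y) q1) :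
    (∀ q0 q1 : ℝ,
      D1Ld q0a q1a + deriv (fun x => D1Ld x q1a) q0a * (q0 - q0a)
          + deriv (fun y => D1Ld q0a y) q1a * (q1 - q1a)
        = deriv (fun x => Ltd x q1) q0) ∧
    (∀ q0 q1 : ℝ,
      D2Ld q0a q1a + deriv (fun x => D2Ld x q1a) q0a * (q0 - q0a)
          + deriv (fun y => D2Ld q0a y) q1a * (q1 - q1a)
        = deriv (fun y => Ltd q0 y) q1) := by
  have hΔ : Δt ≠ 0 := ne_of_gt hΔt
  have hVd : DifferentiableAt ℝ V qda := hVa.differentiableAt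
  have hWd : DifferentiableAt ℝ W qa := hWa.differentiableAt
  have hV2 : DifferentiableAt ℝ (deriv V) qda := by
    obtain ⟨s, hs, hVs⟩ := hVa.exists_mem_nhds_analyticOnNhd
    exact (hVs.deriv qda (mem_of_mem_nhds hs)).differentiableAt
  have hW2 : DifferentiableAt ℝ (deriv W) qa := by
    obtain ⟨s, hs, hWs⟩ := hWa.exists_mem_nhds_analyticOnNhd
    exact (hWs.deriv qa (mem_of_mem_nhds hs)).differentiableAt
  have hVev : ∀ᶠ z in nhds qda, DifferentiableAt ℝ V z :=
    hVa.eventually_analyticAt.mono fun z hz => hz.differentiableAt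
  have hWev : ∀ᶠ z in nhds qa, DifferentiableAt ℝ W z :=
    hWa.eventually_analyticAt.mono fun z hz => hz.differentiableAt
  -- key derivative formulas for Ld
  have key1 : ∀ x y : ℝ, DifferentiableAt ℝ V ((y - x)/Δt) →
      DifferentiableAt ℝ W (b*x + c*y) →
      HasDerivAt (fun t => Ld t y)
        (Δt * (deriv V ((y - x)/Δt) * -Δt⁻¹) + Δt * (deriv W (b*x + c*y) * b)) x := by
    intro x y hV hW
    refine megaHD V W Δt Δt 0 (-Δt⁻¹) (y/Δt) b (c*y) x _ _ ?_ rfl hV hW _ ?_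
    · field_simp; ring
    · intro t
      rw [hLd, hL, show (y - t)/Δt = -Δt⁻¹*t + y/Δt from by field_simp; ring]
      ring
  have key2 : ∀ x y : ℝ, DifferentiableAt ℝ V ((y - x)/Δt) →
      DifferentiableAt ℝ W (b*x + c*y) →
      HasDerivAt (fun t => Ld x t)
        (Δt * (deriv V ((y - x)/Δt) * Δt⁻¹) + Δt * (deriv W (b*x + c*y) * c)) y := by
    intro x y hV hW
    refine megaHD V W Δt Δt 0 Δt⁻¹ (-(x/Δt)) c (b*x) y _ _ ?_ ?_ hV hW _ ?_
    · field_simp; ring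
    · ring
    · intro t
      rw [hLd, hL, show (t - x)/Δt = Δt⁻¹*t + -(x/Δt) from by field_simp; ring,
        show b*x + c*t = c*t + b*x from by ring]
      ring
  -- tendsto / eventual differentiability
  have tdVx : Filter.Tendsto (fun x : ℝ => (q1a - x)/Δt) (nhds q0a) (nhds qda) := by
    rw [← hqda]
    exact ((continuous_const.sub continuous_id).div_const Δt).tendsto q0a
  have tdVy : Filter.Tendsto (fun y : ℝ => (y - q0a)/Δt) (nhds q1a) (nhds qda) := by
    rw [← hqda]
    exact ((continuous_id.sub continuous_const).div_const Δt).tendsto q1a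
  have tdWx : Filter.Tendsto (fun x : ℝ => b*x + c*q1a) (nhds q0a) (nhds qa) := by
    rw [← hqa]
    exact ((continuous_const.mul continuous_id).add continuous_const).tendsto q0a
  have tdWy : Filter.Tendsto (fun y : ℝ => b*q0a + c*y) (nhds q1a) (nhds qa) := by
    rw [← hqa]
    exact (continuous_const.add (continuous_const.mul continuous_id)).tendsto q1a
  have evVx : ∀ᶠ x in nhds q0a, DifferentiableAt ℝ V ((q1a - x)/Δt) := tdVx.eventually hVev
  have evVy : ∀ᶠ y in nhds q1a, DifferentiableAt ℝ V ((y - q0a)/Δt) := tdVy.eventually hVev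
  have evWx : ∀ᶠ x in nhds q0a, DifferentiableAt ℝ W (b*x + c*q1a) := tdWx.eventually hWev
  have evWy : ∀ᶠ y in nhds q1a, DifferentiableAt ℝ W (b*q0a + c*y) := tdWy.eventually hWev
  have hVA : DifferentiableAt ℝ V ((q1a - q0a)/Δt) := by rw [hqda]; exact hVd
  have hWA : DifferentiableAt ℝ W (b*q0a + c*q1a) := by rw [hqa]; exact hWd
  -- values at the base point
  have hld1 := key1 q0a q1a hVA hWA
  rw [hqda, hqa] at hld1
  have hD1val : D1Ld q0a q1a = Δt * (deriv V qda * -Δt⁻¹) + Δt * (deriv W qa * b) := by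
    rw [hD1]; exact hld1.deriv
  have hld2 := key2 q0a q1a hVA hWA
  rw [hqda, hqa] at hld2
  have hD2val : D2Ld q0a q1a = Δt * (deriv V qda * Δt⁻¹) + Δt * (deriv W qa * c) := by
    rw [hD2]; exact hld2.deriv
  -- eventual formulas
  have e1x : (fun x => D1Ld x q1a) =ᶠ[nhds q0a]
      (fun x => Δt * (deriv V ((q1a - x)/Δt) * -Δt⁻¹) + Δt * (deriv W (b*x + c*q1a) * b)) := by
    filter_upwards [evVx, evWx] with x hV hW
    rw [hD1]; exact (key1 x q1a hV hW).deriv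
  have e1y : (fun y => D1Ld q0a y) =ᶠ[nhds q1a]
      (fun y => Δt * (deriv V ((y - q0a)/Δt) * -Δt⁻¹) + Δt * (deriv W (b*q0a + c*y) * b)) := by
    filter_upwards [evVy, evWy] with y hV hW
    rw [hD1]; exact (key1 q0a y hV hW).deriv
  have e2x : (fun x => D2Ld x q1a) =ᶠ[nhds q0a]
      (fun x => Δt * (deriv V ((q1a - x)/Δt) * Δt⁻¹) + Δt * (deriv W (b*x + c*q1a) * c)) := by
    filter_upwards [evVx, evWx] with x hV hW
    rw [hD2]; exact (key2 x q1a hV hW).deriv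
  have e2y : (fun y => D2Ld q0a y) =ᶠ[nhds q1a]
      (fun y => Δt * (deriv V ((y - q0a)/Δt) * Δt⁻¹) + Δt * (deriv W (b*q0a + c*y) * c)) := by
    filter_upwards [evVy, evWy] with y hV hW
    rw [hD2]; exact (key2 q0a y hV hW).deriv
  -- second derivatives
  have hz1x : -Δt⁻¹ * q0a + q1a/Δt = qda := by rw [← hqda]; field_simp; ring
  have hz1y : Δt⁻¹ * q1a + -(q0a/Δt) = qda := by rw [← hqda]; field_simp; ring
  have hz2y : c * q1a + b * q0a = qa := by rw [← hqa]; ring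
  have hd1x : HasDerivAt
      (fun x => Δt * (deriv V ((q1a - x)/Δt) * -Δt⁻¹) + Δt * (deriv W (b*x + c*q1a) * b))
      ((Δt * -Δt⁻¹) * (deriv (deriv V) qda * -Δt⁻¹) + (Δt * b) * (deriv (deriv W) qa * b)) q0a := by
    refine megaHD (deriv V) (deriv W) (Δt * -Δt⁻¹) (Δt*b) 0 (-Δt⁻¹) (q1a/Δt) b (c*q1a)
      q0a qda qa hz1x hqa hV2 hW2 _ ?_
    intro t
    rw [show (q1a - t)/Δt = -Δt⁻¹*t + q1a/Δt from by field_simp; ring]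
    ring
  have hd1y : HasDerivAt
      (fun y => Δt * (deriv V ((y - q0a)/Δt) * -Δt⁻¹) + Δt * (deriv W (b*q0a + c*y) * b))
      ((Δt * -Δt⁻¹) * (deriv (deriv V) qda * Δt⁻¹) + (Δt * b) * (deriv (deriv W) qa * c)) q1a := by
    refine megaHD (deriv V) (deriv W) (Δt * -Δt⁻¹) (Δt*b) 0 Δt⁻¹ (-(q0a/Δt)) c (b*q0a)
      q1a qda qa hz1y hz2y hV2 hW2 _ ?_
    intro t
    rw [show (t - q0a)/Δt = Δt⁻¹*t + -(q0a/Δt) from by field_simp; ring,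
      show b*q0a + c*t = c*t + b*q0a from by ring]
    ring
  have hd2x : HasDerivAt
      (fun x => Δt * (deriv V ((q1a - x)/Δt) * Δt⁻¹) + Δt * (deriv W (b*x + c*q1a) * c))
      ((Δt * Δt⁻¹) * (deriv (deriv V) qda * -Δt⁻¹) + (Δt * c) * (deriv (deriv W) qa * b)) q0a := by
    refine megaHD (deriv V) (deriv W) (Δt * Δt⁻¹) (Δt*c) 0 (-Δt⁻¹) (q1a/Δt) b (c*q1a)
      q0a qda qa hz1x hqa hV2 hW2 _ ?_
    intro t
    rw [show (q1a - t)/Δt = -Δt⁻¹*t + q1a/Δt from by field_simp; ring]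
    ring
  have hd2y : HasDerivAt
      (fun y => Δt * (deriv V ((y - q0a)/Δt) * Δt⁻¹) + Δt * (deriv W (b*q0a + c*y) * c))
      ((Δt * Δt⁻¹) * (deriv (deriv V) qda * Δt⁻¹) + (Δt * c) * (deriv (deriv W) qa * c)) q1a := by
    refine megaHD (deriv V) (deriv W) (Δt * Δt⁻¹) (Δt*c) 0 Δt⁻¹ (-(q0a/Δt)) c (b*q0a)
      q1a qda qa hz1y hz2y hV2 hW2 _ ?_
    intro t
    rw [show (t - q0a)/Δt = Δt⁻¹*t + -(q0a/Δt) from by field_simp; ring,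
      show b*q0a + c*t = c*t + b*q0a from by ring]
    ring
  have hD1x : deriv (fun x => D1Ld x q1a) q0a
      = (Δt * -Δt⁻¹) * (deriv (deriv V) qda * -Δt⁻¹) + (Δt * b) * (deriv (deriv W) qa * b) := by
    rw [e1x.deriv_eq]; exact hd1x.deriv
  have hD1y : deriv (fun y => D1Ld q0a y) q1a
      = (Δt * -Δt⁻¹) * (deriv (deriv V) qda * Δt⁻¹) + (Δt * b) * (deriv (deriv W) qa * c) := by
    rw [e1y.deriv_eq]; exact hd1y.deriv
  have hD2x : deriv (fun x => D2Ld x q1a) q0a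
      = (Δt * Δt⁻¹) * (deriv (deriv V) qda * -Δt⁻¹) + (Δt * c) * (deriv (deriv W) qa * b) := by
    rw [e2x.deriv_eq]; exact hd2x.deriv
  have hD2y : deriv (fun y => D2Ld q0a y) q1a
      = (Δt * Δt⁻¹) * (deriv (deriv V) qda * Δt⁻¹) + (Δt * c) * (deriv (deriv W) qa * c) := by
    rw [e2y.deriv_eq]; exact hd2y.deriv
  constructor
  · intro q0 q1
    have hR : HasDerivAt (fun x => Ltd x q1)
        (Δt * (deriv (quadP (deriv V qda) (deriv (deriv V) qda) qda) ((q1 - q0)/Δt) * -Δt⁻¹)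
          + Δt * (deriv (quadP (deriv W qa) (deriv (deriv W) qa) qa) (b*q0 + c*q1) * b)) q0 := by
      refine megaHD (quadP (deriv V qda) (deriv (deriv V) qda) qda)
        (quadP (deriv W qa) (deriv (deriv W) qa) qa)
        Δt Δt (Δt * L qa qda) (-Δt⁻¹) (q1/Δt) b (c*q1) q0 ((q1 - q0)/Δt) (b*q0 + c*q1)
        ?_ rfl ((quadP_hasDerivAt _ _ _ _).differentiableAt)
        ((quadP_hasDerivAt _ _ _ _).differentiableAt) _ ?_
      · field_simp; ring
      · intro t
        rw [hLtd, hLt, show (q1 - t)/Δt = -Δt⁻¹*t + q1/Δt from by field_simp; ring]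
        simp only [quadP]; ring
    rw [hD1val, hD1x, hD1y, hR.deriv,
      (quadP_hasDerivAt (deriv V qda) (deriv (deriv V) qda) qda ((q1 - q0)/Δt)).deriv,
      (quadP_hasDerivAt (deriv W qa) (deriv (deriv W) qa) qa (b*q0 + c*q1)).deriv]
    subst hqa; subst hqda
    field_simp
    ring
  · intro q0 q1
    have hR : HasDerivAt (fun y => Ltd q0 y)
        (Δt * (deriv (quadP (deriv V qda) (deriv (deriv V) qda) qda) ((q1 - q0)/Δt) * Δt⁻¹)
          + Δt * (deriv (quadP (deriv W qa) (deriv (deriv W) qa) qa) (b*q0 + c*q1) * c)) q1 := by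
      refine megaHD (quadP (deriv V qda) (deriv (deriv V) qda) qda)
        (quadP (deriv W qa) (deriv (deriv W) qa) qa)
        Δt Δt (Δt * L qa qda) Δt⁻¹ (-(q0/Δt)) c (b*q0) q1 ((q1 - q0)/Δt) (b*q0 + c*q1)
        ?_ ?_ ((quadP_hasDerivAt _ _ _ _).differentiableAt)
        ((quadP_hasDerivAt _ _ _ _).differentiableAt) _ ?_
      · field_simp; ring
      · ring
      · intro t
        rw [hLtd, hLt, show (t - q0)/Δt = Δt⁻¹*t + -(q0/Δt) from by field_simp; ring,
          show b*q0 + c*t = c*t + b*q0 from by ring]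
        simp only [quadP]; ring
    rw [hD2val, hD2x, hD2y, hR.deriv,
      (quadP_hasDerivAt (deriv V qda) (deriv (deriv V) qda) qda ((q1 - q0)/Δt)).deriv,
      (quadP_hasDerivAt (deriv W qa) (deriv (deriv W) qa) qa (b*q0 + c*q1)).deriv]
    subst hqa; subst hqda
    field_simp
    ring
end

section
/- Let f : R × R × R → R be twice continuously differentiable and separable, f(q, q̇, u) = z(q) + y(q̇) + r(u), and let f̃ be its first-order Taylor approximation at a = (qᵃ, q̇ᵃ, uᵃ). Define discrete forces f_i^± = (Δt/2) f(b q0 + c q1, (q1−q0)/Δt, u) and f̃_i^± = (Δt/2) f̃(b q0 + c q1, (q1−q0)/Δt, u). Then f̃_i^± is affine in (q0, q1, u), and f̃_i^± equals the Jacobian linearization of f_i^± at any point (q0ᵃ, q1ᵃ, uᵃ) with b q0ᵃ + c q1ᵃ = qᵃ and (q1ᵃ − q0ᵃ)/Δt = q̇ᵃ. -/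
/-- the discrete force built from the first-order Taylor approximation of a
separable force is affine, and coincides with the Jacobian linearization of the discrete
force at any consistent approximation point. -/
theorem discrete_force_linearization
    (z y r : ℝ → ℝ) (hz : ContDiff ℝ 2 z) (hy : ContDiff ℝ 2 y) (hr : ContDiff ℝ 2 r)
    (f : ℝ → ℝ → ℝ → ℝ) (hf : ∀ q qd u, f q qd u = z q + y qd + r u)
    (qa qda ua b c Δt : ℝ) (hΔt : 0 < Δt)
    (ft : ℝ → ℝ → ℝ → ℝ)
    (hft : ∀ q qd u, ft q qd u = f qa qda ua + deriv z qa * (q - qa)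
        + deriv y qda * (qd - qda) + deriv r ua * (u - ua))
    (fd ftd : ℝ → ℝ → ℝ → ℝ)
    (hfd : ∀ q0 q1 u, fd q0 q1 u = (Δt/2) * f (b * q0 + c * q1) ((q1 - q0) / Δt) u)
    (hftd : ∀ q0 q1 u, ftd q0 q1 u = (Δt/2) * ft (b * q0 + c * q1) ((q1 - q0) / Δt) u)
    (q0a q1a : ℝ) (hqa : b * q0a + c * q1a = qa) (hqda : (q1a - q0a) / Δt = qda) :
    (∃ α β γ δ : ℝ, ∀ q0 q1 u, ftd q0 q1 u = α * q0 + β * q1 + γ * u + δ) ∧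
    (∀ q0 q1 u : ℝ,
      ftd q0 q1 u = fd q0a q1a ua
        + deriv (fun x => fd x q1a ua) q0a * (q0 - q0a)
        + deriv (fun x => fd q0a x ua) q1a * (q1 - q1a)
        + deriv (fun x => fd q0a q1a x) ua * (u - ua)) := by
  have hΔt' : Δt ≠ 0 := ne_of_gt hΔt
  have hz' : HasDerivAt z (deriv z qa) qa :=
    ((hz.differentiable (by norm_num)) qa).hasDerivAt
  have hy' : HasDerivAt y (deriv y qda) qda :=
    ((hy.differentiable (by norm_num)) qda).hasDerivAt
  have hr' : HasDerivAt r (deriv r ua) ua :=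
    ((hr.differentiable (by norm_num)) ua).hasDerivAt
  -- derivative in q0
  have h0 : HasDerivAt (fun x => fd x q1a ua)
      ((Δt/2) * (deriv z qa * b + deriv y qda * (-1/Δt))) q0a := by
    have hin1 : HasDerivAt (fun x : ℝ => b * x + c * q1a) b q0a := by
      simpa using ((hasDerivAt_id q0a).const_mul b).add_const (c * q1a)
    have hin2 : HasDerivAt (fun x : ℝ => (q1a - x) / Δt) (-1/Δt) q0a := by
      simpa [neg_div] using ((hasDerivAt_id q0a).const_sub q1a).div_const Δt
    have hz2 : HasDerivAt z (deriv z qa) (b * q0a + c * q1a) := by rw [hqa]; exact hz'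
    have hy2 : HasDerivAt y (deriv y qda) ((q1a - q0a) / Δt) := by rw [hqda]; exact hy'
    have hzc : HasDerivAt (fun x => z (b * x + c * q1a)) (deriv z qa * b) q0a := by
      simpa [Function.comp_def] using hz2.comp q0a hin1
    have hyc : HasDerivAt (fun x => y ((q1a - x) / Δt)) (deriv y qda * (-1/Δt)) q0a := by
      simpa [Function.comp_def] using hy2.comp q0a hin2
    have : HasDerivAt (fun x => (Δt/2) * (z (b * x + c * q1a) + y ((q1a - x) / Δt) + r ua))
        ((Δt/2) * (deriv z qa * b + deriv y qda * (-1/Δt))) q0a := by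
      simpa using (((hzc.add hyc).add_const (r ua)).const_mul (Δt/2))
    refine this.congr_deriv ?_ |>.congr_of_eventuallyEq ?_
    · rfl
    · filter_upwards with x
      simp [hfd, hf]
  -- derivative in q1
  have h1 : HasDerivAt (fun x => fd q0a x ua)
      ((Δt/2) * (deriv z qa * c + deriv y qda * (1/Δt))) q1a := by
    have hin1 : HasDerivAt (fun x : ℝ => b * q0a + c * x) c q1a := by
      simpa using (((hasDerivAt_id q1a).const_mul c).const_add (b * q0a))
    have hin2 : HasDerivAt (fun x : ℝ => (x - q0a) / Δt) (1/Δt) q1a := by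
      simpa [one_div] using ((hasDerivAt_id q1a).sub_const q0a).div_const Δt
    have hz2 : HasDerivAt z (deriv z qa) (b * q0a + c * q1a) := by rw [hqa]; exact hz'
    have hy2 : HasDerivAt y (deriv y qda) ((q1a - q0a) / Δt) := by rw [hqda]; exact hy'
    have hzc : HasDerivAt (fun x => z (b * q0a + c * x)) (deriv z qa * c) q1a := by
      simpa [Function.comp_def] using hz2.comp q1a hin1
    have hyc : HasDerivAt (fun x => y ((x - q0a) / Δt)) (deriv y qda * (1/Δt)) q1a := by
      simpa [Function.comp_def] using hy2.comp q1a hin2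
    have : HasDerivAt (fun x => (Δt/2) * (z (b * q0a + c * x) + y ((x - q0a) / Δt) + r ua))
        ((Δt/2) * (deriv z qa * c + deriv y qda * (1/Δt))) q1a := by
      simpa using (((hzc.add hyc).add_const (r ua)).const_mul (Δt/2))
    refine this.congr_of_eventuallyEq ?_
    filter_upwards with x
    simp [hfd, hf]
  -- derivative in u
  have h2 : HasDerivAt (fun x => fd q0a q1a x) ((Δt/2) * deriv r ua) ua := by
    have : HasDerivAt (fun x => (Δt/2) * (z (b * q0a + c * q1a) + y ((q1a - q0a) / Δt) + r x))
        ((Δt/2) * deriv r ua) ua := by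
      simpa using ((hr'.const_add (z (b * q0a + c * q1a) + y ((q1a - q0a) / Δt))).const_mul (Δt/2))
    refine this.congr_of_eventuallyEq ?_
    filter_upwards with x
    simp [hfd, hf, add_assoc]
  constructor
  · refine ⟨(Δt/2) * (deriv z qa * b + deriv y qda * (-1/Δt)),
      (Δt/2) * (deriv z qa * c + deriv y qda * (1/Δt)),
      (Δt/2) * deriv r ua,
      (Δt/2) * (f qa qda ua - deriv z qa * qa - deriv y qda * qda - deriv r ua * ua), ?_⟩
    intro q0 q1 u
    rw [hftd, hft]
    field_simp
    ring
  · intro q0 q1 u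
    rw [h0.deriv, h1.deriv, h2.deriv, hftd, hft, hfd, hf, hf, ← hqa, ← hqda]
    field_simp
    ring
end

section
/- Consider the forced discrete Euler–Lagrange equations p_i + D₁L_d(q_i,q_{i+1}) + f_i⁻ = 0 and p_{i+1} − D₂L_d(q_i,q_{i+1}) − f_i⁺ = 0 with L_d(q0,q1) = Δt[(1/2)‖(q1−q0)/Δt‖² − gᵀ(b q0 + c q1)], b + c = 1, and discrete forces f_i⁻ = f_i⁺ = (Δt/2) F_i for arbitrary vectors F_i ∈ R^n. Then for each coordinate j with g_j = 0 and every N ≥ 0, the discrete momentum satisfies p_N^j − p_0^j = Δt · Σ_{i=0}^{N−1} F_i^j. -/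
open Matrix

lemma hasFDerivAt_sum_proj {n : ℕ} (φ : Fin n → ℝ → ℝ) (d : Fin n → ℝ)
    (x : Fin n → ℝ) (h : ∀ k, HasDerivAt (φ k) (d k) (x k)) :
    HasFDerivAt (fun y : Fin n → ℝ => ∑ k, φ k (y k))
      (∑ k, d k • (ContinuousLinearMap.proj k : (Fin n → ℝ) →L[ℝ] ℝ)) x := by
  apply HasFDerivAt.fun_sum
  intro k _
  have hp : HasFDerivAt (fun y : Fin n → ℝ => y k)
      (ContinuousLinearMap.proj k : (Fin n → ℝ) →L[ℝ] ℝ) x :=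
    (ContinuousLinearMap.proj k : (Fin n → ℝ) →L[ℝ] ℝ).hasFDerivAt
  exact (h k).comp_hasFDerivAt x hp

lemma fderiv_sum_proj_single {n : ℕ} (φ : Fin n → ℝ → ℝ) (d : Fin n → ℝ)
    (x : Fin n → ℝ) (h : ∀ k, HasDerivAt (φ k) (d k) (x k)) (j : Fin n) :
    fderiv ℝ (fun y : Fin n → ℝ => ∑ k, φ k (y k)) x (Pi.single j 1) = d j := by
  rw [(hasFDerivAt_sum_proj φ d x h).fderiv]
  simp [ContinuousLinearMap.sum_apply, Pi.single_apply, Finset.sum_ite_eq']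

/-- discrete Noether theorem with forcing: for coordinates with `g j = 0`,
the change of discrete momentum equals the accumulated discrete impulse. -/
theorem discrete_noether_forced (n : ℕ) (Δt b c : ℝ) (hΔt : 0 < Δt) (hbc : b + c = 1)
    (g : Fin n → ℝ)
    (Ld : (Fin n → ℝ) → (Fin n → ℝ) → ℝ)
    (hLd : ∀ q0 q1 : Fin n → ℝ, Ld q0 q1 =
      Δt * ((1/2) * ((Δt⁻¹ • (q1 - q0)) ⬝ᵥ (Δt⁻¹ • (q1 - q0)))
        - g ⬝ᵥ (b • q0 + c • q1)))
    (q p F : ℕ → Fin n → ℝ)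
    (heqm : ∀ i j, p i j + fderiv ℝ (fun x => Ld x (q (i+1))) (q i) (Pi.single j 1)
      + (Δt/2) * F i j = 0)
    (heqp : ∀ i j, p (i+1) j - fderiv ℝ (fun x => Ld (q i) x) (q (i+1)) (Pi.single j 1)
      - (Δt/2) * F i j = 0) :
    ∀ j, g j = 0 → ∀ N : ℕ, p N j - p 0 j = Δt * ∑ i ∈ Finset.range N, F i j := by
  intro j hg N
  have hne : Δt ≠ 0 := ne_of_gt hΔt
  have step : ∀ i, p (i+1) j - p i j = Δt * F i j := by
    intro i
    have h1 : fderiv ℝ (fun x => Ld x (q (i+1))) (q i) (Pi.single j 1)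
        = -(Δt⁻¹ * (q (i+1) j - q i j)) - Δt * (b * g j) := by
      have hfun : (fun x => Ld x (q (i+1))) =
          fun x : Fin n → ℝ => ∑ k,
            Δt * ((1/2) * ((Δt⁻¹ * (q (i+1) k - x k)) * (Δt⁻¹ * (q (i+1) k - x k)))
              - g k * (b * x k + c * q (i+1) k)) := by
        funext x
        rw [hLd]
        simp only [dotProduct, Pi.smul_apply, Pi.sub_apply, Pi.add_apply, smul_eq_mul,
          Finset.mul_sum]
        rw [← Finset.sum_sub_distrib, Finset.mul_sum]
      rw [hfun]
      have hder : ∀ k, HasDerivAt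
          (fun s : ℝ => Δt * ((1/2) * ((Δt⁻¹ * (q (i+1) k - s)) * (Δt⁻¹ * (q (i+1) k - s)))
            - g k * (b * s + c * q (i+1) k)))
          (Δt * ((1/2) * ((Δt⁻¹ * -1) * (Δt⁻¹ * (q (i+1) k - q i k))
            + (Δt⁻¹ * (q (i+1) k - q i k)) * (Δt⁻¹ * -1)) - g k * (b * 1))) (q i k) := by
        intro k
        have h2 : HasDerivAt (fun s : ℝ => Δt⁻¹ * (q (i+1) k - s)) (Δt⁻¹ * -1) (q i k) :=
          (((hasDerivAt_id (q i k)).const_sub (q (i+1) k)).const_mul Δt⁻¹)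
        have h3 := (h2.mul h2).const_mul (1/2 : ℝ)
        have hl : HasDerivAt (fun s : ℝ => g k * (b * s + c * q (i+1) k)) (g k * (b * 1))
            (q i k) :=
          ((((hasDerivAt_id (q i k)).const_mul b).add_const (c * q (i+1) k)).const_mul (g k))
        exact (h3.sub hl).const_mul Δt
      rw [fderiv_sum_proj_single _ _ _ hder]
      field_simp
      ring
    have h2 : fderiv ℝ (fun x => Ld (q i) x) (q (i+1)) (Pi.single j 1)
        = Δt⁻¹ * (q (i+1) j - q i j) - Δt * (c * g j) := by
      have hfun : (fun x => Ld (q i) x) =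
          fun x : Fin n → ℝ => ∑ k,
            Δt * ((1/2) * ((Δt⁻¹ * (x k - q i k)) * (Δt⁻¹ * (x k - q i k)))
              - g k * (b * q i k + c * x k)) := by
        funext x
        rw [hLd]
        simp only [dotProduct, Pi.smul_apply, Pi.sub_apply, Pi.add_apply, smul_eq_mul,
          Finset.mul_sum]
        rw [← Finset.sum_sub_distrib, Finset.mul_sum]
      rw [hfun]
      have hder : ∀ k, HasDerivAt
          (fun s : ℝ => Δt * ((1/2) * ((Δt⁻¹ * (s - q i k)) * (Δt⁻¹ * (s - q i k)))
            - g k * (b * q i k + c * s)))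
          (Δt * ((1/2) * ((Δt⁻¹ * 1) * (Δt⁻¹ * (q (i+1) k - q i k))
            + (Δt⁻¹ * (q (i+1) k - q i k)) * (Δt⁻¹ * 1)) - g k * (c * 1))) (q (i+1) k) := by
        intro k
        have h2' : HasDerivAt (fun s : ℝ => Δt⁻¹ * (s - q i k)) (Δt⁻¹ * 1) (q (i+1) k) :=
          (((hasDerivAt_id (q (i+1) k)).sub_const (q i k)).const_mul Δt⁻¹)
        have h3 := (h2'.mul h2').const_mul (1/2 : ℝ)
        have hl : HasDerivAt (fun s : ℝ => g k * (b * q i k + c * s)) (g k * (c * 1))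
            (q (i+1) k) := by
          have := (((hasDerivAt_id (q (i+1) k)).const_mul c).const_add (b * q i k)).const_mul
            (g k)
          simpa using this
        exact (h3.sub hl).const_mul Δt
      rw [fderiv_sum_proj_single _ _ _ hder]
      field_simp
      ring
    have em := heqm i j
    have ep := heqp i j
    rw [h1] at em
    rw [h2] at ep
    rw [hg] at em ep
    simp only [mul_zero, zero_mul, sub_zero] at em ep
    linarith
  induction N with
  | zero => simp
  | succ N ih =>
    rw [Finset.sum_range_succ, mul_add]
    have := step N
    linarith
end

section
/- Let Φ ∈ R^{n×n}, and suppose for each j = 1,…,J matrices Ĉ_j, D̂_j and a feedback gain K̂ are given such that P ∈ R^{n×n} is symmetric positive definite and satisfies P − (Φ + Ĉ_j + D̂_j K̂)ᵀ P (Φ + Ĉ_j + D̂_j K̂) ⪰ Q + K̂ᵀ R K̂ for all j, with Q ⪰ 0 and R ≻ 0. Then for any sequence x_{k+1} = (Φ + C_k + D_k K̂) x_k where each (C_k, D_k) is a convex combination of {(Ĉ_j, D̂_j)}: the function V(x) = xᵀPx satisfies V(x_{k+1}) ≤ V(x_k) − (x_kᵀ Q x_k + x_kᵀ K̂ᵀ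 R K̂ x_k), and hence Σ_{k=0}^{∞} (x_kᵀ Q x_k + u_kᵀ R u_k) ≤ x₀ᵀ P x₀ with u_k = K̂ x_k — provided the map x ↦ xᵀ(Φ+C+D K̂)ᵀP(Φ+C+D K̂)x is convex in (C,D) along the convex combinations used (which holds since it is a convex quadratic in (C,D) for fixed x). -/
open Matrix

private lemma mulVec_dot {a b : ℕ} (M : Matrix (Fin a) (Fin b) ℝ) (x : Fin b → ℝ)
    (y : Fin a → ℝ) : (M *ᵥ x) ⬝ᵥ y = x ⬝ᵥ (Mᵀ *ᵥ y) := by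
  rw [dotProduct_comm, dotProduct_mulVec, dotProduct_comm, mulVec_transpose]

private lemma quad_convexOn {n : ℕ} {P : Matrix (Fin n) (Fin n) ℝ} (hP : P.PosSemidef)
    (hs : Pᵀ = P) : ConvexOn ℝ Set.univ (fun u : Fin n → ℝ => u ⬝ᵥ (P *ᵥ u)) := by
  have hsymm : ∀ u w : Fin n → ℝ, u ⬝ᵥ (P *ᵥ w) = w ⬝ᵥ (P *ᵥ u) := by
    intro u w
    rw [dotProduct_comm, mulVec_dot, hs]
  have hnn : ∀ u : Fin n → ℝ, 0 ≤ u ⬝ᵥ (P *ᵥ u) := fun u => by simpa using hP.dotProduct_mulVec_nonneg u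
  have key : ∀ u w : Fin n → ℝ,
      2 * (u ⬝ᵥ (P *ᵥ w)) ≤ u ⬝ᵥ (P *ᵥ u) + w ⬝ᵥ (P *ᵥ w) := by
    intro u w
    have h0 := hnn (u - w)
    have hexp : (u - w) ⬝ᵥ (P *ᵥ (u - w))
        = u ⬝ᵥ (P *ᵥ u) - 2 * (u ⬝ᵥ (P *ᵥ w)) + w ⬝ᵥ (P *ᵥ w) := by
      rw [mulVec_sub, dotProduct_sub, sub_dotProduct, sub_dotProduct, hsymm w u]
      ring
    linarith [hexp ▸ h0]
  refine ⟨convex_univ, fun u _ w _ a b ha hb hab => ?_⟩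
  have hE : (a • u + b • w) ⬝ᵥ (P *ᵥ (a • u + b • w))
      = a * a * (u ⬝ᵥ (P *ᵥ u)) + 2 * (a * b) * (u ⬝ᵥ (P *ᵥ w))
        + b * b * (w ⬝ᵥ (P *ᵥ w)) := by
    rw [mulVec_add, mulVec_smul, mulVec_smul, dotProduct_add, add_dotProduct,
      add_dotProduct, smul_dotProduct, smul_dotProduct, smul_dotProduct,
      smul_dotProduct, dotProduct_smul, dotProduct_smul, dotProduct_smul,
      dotProduct_smul, hsymm w u]
    simp only [smul_eq_mul]
    ring
  have hk := key u w
  have h3 : 0 ≤ a * b * (u ⬝ᵥ (P *ᵥ u) + w ⬝ᵥ (P *ᵥ w) - 2 * (u ⬝ᵥ (P *ᵥ w))) :=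
    mul_nonneg (mul_nonneg ha hb) (by linarith)
  have hb' : b = 1 - a := by linarith
  simp only [smul_eq_mul]
  rw [hE]
  rw [hb'] at h3 ⊢
  nlinarith [h3]

private lemma quad_convex {n J : ℕ} {P : Matrix (Fin n) (Fin n) ℝ} (hP : P.PosSemidef)
    (hs : Pᵀ = P) (μ : Fin J → ℝ) (hμ0 : ∀ j, 0 ≤ μ j) (hμ1 : ∑ j, μ j = 1)
    (v : Fin J → Fin n → ℝ) :
    (∑ j, μ j • v j) ⬝ᵥ (P *ᵥ ∑ j, μ j • v j) ≤ ∑ j, μ j * (v j ⬝ᵥ (P *ᵥ v j)) := by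
  have h := (quad_convexOn hP hs).map_sum_le (t := Finset.univ) (w := μ) (p := v)
    (fun i _ => hμ0 i) hμ1 (fun i _ => Set.mem_univ _)
  simpa [smul_eq_mul] using h

/-- terminal cost certification: the vertex LMIs imply a Lyapunov decrease
along all trajectories of the polytopic uncertain closed loop, and hence the
infinite-horizon cost is bounded by `x₀ᵀ P x₀`. -/
theorem terminal_cost_certification (n m J : ℕ)
    (Φ : Matrix (Fin n) (Fin n) ℝ)
    (Chat : Fin J → Matrix (Fin n) (Fin n) ℝ)
    (Dhat : Fin J → Matrix (Fin n) (Fin m) ℝ)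
    (Khat : Matrix (Fin m) (Fin n) ℝ)
    (P Q : Matrix (Fin n) (Fin n) ℝ) (R : Matrix (Fin m) (Fin m) ℝ)
    (hP : P.PosDef) (hPsymm : P.IsSymm) (hQ : Q.PosSemidef) (hR : R.PosDef)
    (hLMI : ∀ j, (P - (Φ + Chat j + Dhat j * Khat)ᵀ * P * (Φ + Chat j + Dhat j * Khat)
      - (Q + Khatᵀ * R * Khat)).PosSemidef)
    (x : ℕ → Fin n → ℝ)
    (C : ℕ → Matrix (Fin n) (Fin n) ℝ) (D : ℕ → Matrix (Fin n) (Fin m) ℝ)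
    (hconv : ∀ k, ∃ μ : Fin J → ℝ, (∀ j, 0 ≤ μ j) ∧ (∑ j, μ j = 1) ∧
      C k = ∑ j, μ j • Chat j ∧ D k = ∑ j, μ j • Dhat j)
    (hdyn : ∀ k, x (k+1) = (Φ + C k + D k * Khat) *ᵥ x k) :
    (∀ k, x (k+1) ⬝ᵥ (P *ᵥ x (k+1)) ≤
      x k ⬝ᵥ (P *ᵥ x k)
        - (x k ⬝ᵥ (Q *ᵥ x k) + x k ⬝ᵥ ((Khatᵀ * R * Khat) *ᵥ x k))) ∧
    ∑' k : ℕ, (x k ⬝ᵥ (Q *ᵥ x k) + (Khat *ᵥ x k) ⬝ᵥ (R *ᵥ (Khat *ᵥ x k)))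
      ≤ x 0 ⬝ᵥ (P *ᵥ x 0) := by
  have hPsd : P.PosSemidef := hP.posSemidef
  have hPt : Pᵀ = P := hPsymm
  -- vertex closed-loop matrices
  set A : Fin J → Matrix (Fin n) (Fin n) ℝ :=
    fun j => Φ + Chat j + Dhat j * Khat with hA
  -- Lyapunov decrease
  have h1 : ∀ k, x (k+1) ⬝ᵥ (P *ᵥ x (k+1)) ≤
      x k ⬝ᵥ (P *ᵥ x k)
        - (x k ⬝ᵥ (Q *ᵥ x k) + x k ⬝ᵥ ((Khatᵀ * R * Khat) *ᵥ x k)) := by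
    intro k
    obtain ⟨μ, hμ0, hμ1, hC, hD⟩ := hconv k
    have e1 : ∑ j, μ j • (Dhat j * Khat) = (∑ j, μ j • Dhat j) * Khat := by
      rw [Matrix.sum_mul]
      exact Finset.sum_congr rfl fun j _ => (Matrix.smul_mul _ _ _).symm
    have hAk : Φ + C k + D k * Khat = ∑ j, μ j • A j := by
      symm
      rw [hA]
      simp only [smul_add, Finset.sum_add_distrib]
      rw [← Finset.sum_smul, hμ1, one_smul, ← hC, e1, ← hD]
    have hx1 : x (k+1) = ∑ j, μ j • (A j *ᵥ x k) := by
      rw [hdyn k, hAk]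
      rw [show (∑ j, μ j • A j) *ᵥ x k = ∑ j, μ j • (A j *ᵥ x k) from by
        rw [show (∑ j, μ j • A j) *ᵥ x k
            = mulVec.addMonoidHomLeft (x k) (∑ j, μ j • A j) from rfl, map_sum]
        exact Finset.sum_congr rfl fun j _ =>
          smul_mulVec (μ j) (A j) (x k)]
    have hcv := quad_convex hPsd hPt μ hμ0 hμ1 (fun j => A j *ᵥ x k)
    rw [hx1]
    refine le_trans hcv ?_
    have hterm : ∀ j, (A j *ᵥ x k) ⬝ᵥ (P *ᵥ (A j *ᵥ x k)) ≤
        x k ⬝ᵥ (P *ᵥ x k)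
          - (x k ⬝ᵥ (Q *ᵥ x k) + x k ⬝ᵥ ((Khatᵀ * R * Khat) *ᵥ x k)) := by
      intro j
      have hl := (hLMI j).dotProduct_mulVec_nonneg (x k)
      simp only [star_trivial, sub_mulVec, add_mulVec, dotProduct_sub,
        dotProduct_add] at hl
      have heq : (A j *ᵥ x k) ⬝ᵥ (P *ᵥ (A j *ᵥ x k))
          = x k ⬝ᵥ (((A j)ᵀ * P * A j) *ᵥ x k) := by
        rw [mulVec_dot, ← mulVec_mulVec, ← mulVec_mulVec]
      rw [heq]
      rw [hA]
      linarith [hl]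
    calc ∑ j, μ j * ((A j *ᵥ x k) ⬝ᵥ (P *ᵥ (A j *ᵥ x k)))
        ≤ ∑ j, μ j * (x k ⬝ᵥ (P *ᵥ x k)
            - (x k ⬝ᵥ (Q *ᵥ x k) + x k ⬝ᵥ ((Khatᵀ * R * Khat) *ᵥ x k))) :=
          Finset.sum_le_sum fun j _ => mul_le_mul_of_nonneg_left (hterm j) (hμ0 j)
      _ = x k ⬝ᵥ (P *ᵥ x k)
            - (x k ⬝ᵥ (Q *ᵥ x k) + x k ⬝ᵥ ((Khatᵀ * R * Khat) *ᵥ x k)) := by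
          rw [← Finset.sum_mul, hμ1, one_mul]
  refine ⟨h1, ?_⟩
  -- stage cost rewriting
  have hstage : ∀ k, (Khat *ᵥ x k) ⬝ᵥ (R *ᵥ (Khat *ᵥ x k))
      = x k ⬝ᵥ ((Khatᵀ * R * Khat) *ᵥ x k) := by
    intro k
    rw [mulVec_dot, ← mulVec_mulVec, ← mulVec_mulVec]
  set f : ℕ → ℝ := fun k =>
    x k ⬝ᵥ (Q *ᵥ x k) + (Khat *ᵥ x k) ⬝ᵥ (R *ᵥ (Khat *ᵥ x k)) with hf
  have hfnn : ∀ k, 0 ≤ f k := by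
    intro k
    have h1' := hQ.dotProduct_mulVec_nonneg (x k)
    have h2' := hR.posSemidef.dotProduct_mulVec_nonneg (Khat *ᵥ x k)
    simp only [star_trivial] at h1' h2'
    exact add_nonneg h1' h2'
  have hVnn : ∀ k, 0 ≤ x k ⬝ᵥ (P *ᵥ x k) := by
    intro k
    simpa using hPsd.dotProduct_mulVec_nonneg (x k)
  have hpartial : ∀ N, ∑ k ∈ Finset.range N, f k ≤ x 0 ⬝ᵥ (P *ᵥ x 0) := by
    intro N
    have hle : ∀ k, f k ≤ x k ⬝ᵥ (P *ᵥ x k) - x (k+1) ⬝ᵥ (P *ᵥ x (k+1)) := by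
      intro k
      have := h1 k
      rw [hf]
      simp only
      rw [hstage k]
      linarith
    calc ∑ k ∈ Finset.range N, f k
        ≤ ∑ k ∈ Finset.range N,
            (x k ⬝ᵥ (P *ᵥ x k) - x (k+1) ⬝ᵥ (P *ᵥ x (k+1))) :=
          Finset.sum_le_sum fun k _ => hle k
      _ = x 0 ⬝ᵥ (P *ᵥ x 0) - x N ⬝ᵥ (P *ᵥ x N) :=
          Finset.sum_range_sub' (fun k => x k ⬝ᵥ (P *ᵥ x k)) N
      _ ≤ x 0 ⬝ᵥ (P *ᵥ x 0) := by linarith [hVnn N]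
  exact Real.tsum_le_of_sum_range_le hfnn hpartial
end
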